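/- For t ≤ u, the random variables C_t and X_u on the uniform space {H,T}^m are uncorrelated: E[C_t X_u] = E[C_t]·E[X_u]. -/

import Mathlib

open Finset

/-- Number of heads among the first `t` flips of `ω ∈ {H,T}^m` (heads = `true`). -/
def X (m t : ℕ) (ω : Fin m → Bool) : ℕ :=
  (Finset.univ.filter (fun i : Fin m => (i : ℕ) < t ∧ ω i = true)).card

/-- `C t = X (t-1)` if flip `t` (1-indexed) is tails, and `0` otherwise. -/
def C (m t : ℕ) (ω : Fin m → Bool) : ℕ :=
  if h : t - 1 < m then (if ω ⟨t - 1, h⟩ = false then X m (t - 1) ω else 0) else 0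

/-- Number of tails. -/
def Y (m : ℕ) (ω : Fin m → Bool) : ℕ := m - X m m ω

/-- Size of the random partition: `N = Y + ∑_{t=1}^m C_t`. -/
def N (m : ℕ) (ω : Fin m → Bool) : ℕ := Y m ω + ∑ t ∈ Finset.Icc 1 m, C m t ω

/-- Expectation with respect to the uniform distribution on `{H,T}^m`. -/
noncomputable def expec (m : ℕ) (f : (Fin m → Bool) → ℝ) : ℝ :=
  (∑ ω : Fin m → Bool, f ω) / 2 ^ m

/-- Variance with respect to the uniform distribution on `{H,T}^m`. -/
noncomputable def variance (m : ℕ) (f : (Fin m → Bool) → ℝ) : ℝ :=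
  expec m (fun ω => (f ω - expec m f) ^ 2)



lemma card_lt' (m k : ℕ) (h : k ≤ m) : (univ.filter fun i : Fin m => (i:ℕ) < k).card = k := by
  rcases lt_or_eq_of_le h with hk | hk
  · have : (univ.filter fun i : Fin m => (i:ℕ) < k) = Finset.Iio ⟨k, hk⟩ := by
      ext i; simp [Fin.lt_def]
    rw [this, Fin.card_Iio]
  · have : (univ.filter fun i : Fin m => (i:ℕ) < k) = univ := by
      ext i; simpa using lt_of_lt_of_le i.isLt hk.symm.le
    rw [this, Finset.card_univ, Fintype.card_fin, hk]

lemma sum_prod_bool' (m : ℕ) (g : Fin m → Bool → ℝ) :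
    ∑ ω : Fin m → Bool, ∏ k, g k (ω k) = ∏ k, (g k true + g k false) := by
  have := Finset.prod_univ_sum (fun _ : Fin m => (Finset.univ : Finset Bool)) g
  rw [Fintype.piFinset_univ] at this
  rw [← this]
  congr 1; ext k
  simp [Fintype.sum_bool]

lemma sum_ind' (m : ℕ) (S : Finset (Fin m)) (v : Fin m → Bool) :
    ∑ ω : Fin m → Bool, (∏ k ∈ S, (if ω k = v k then (1:ℝ) else 0))
      = 2 ^ m / 2 ^ S.card := by
  have key := sum_prod_bool' m (fun k b => if k ∈ S then (if b = v k then 1 else 0) else 1)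
  have L : ∀ ω : Fin m → Bool,
      (∏ k, (fun k b => if k ∈ S then (if b = v k then (1:ℝ) else 0) else 1) k (ω k))
      = ∏ k ∈ S, (if ω k = v k then (1:ℝ) else 0) := by
    intro ω
    rw [← Finset.prod_subset (Finset.subset_univ S) (by intro x _ hx; simp [hx])]
    exact Finset.prod_congr rfl (by intro x hx; simp [hx])
  have R : (∏ k, ((fun k b => if k ∈ S then (if b = v k then (1:ℝ) else 0) else 1) k true
      + (fun k b => if k ∈ S then (if b = v k then (1:ℝ) else 0) else 1) k false))
      = 2 ^ (m - S.card) := by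
    have hpt : ∀ k : Fin m, ((if k ∈ S then (if true = v k then (1:ℝ) else 0) else 1)
        + (if k ∈ S then (if false = v k then (1:ℝ) else 0) else 1))
        = if k ∈ S then 1 else 2 := by
      intro k
      by_cases hk : k ∈ S <;> simp [hk] <;> cases v k <;> norm_num
    simp only [hpt]
    rw [Finset.prod_ite]
    simp only [Finset.prod_const_one, Finset.prod_const, one_mul]
    congr 1
    rw [Finset.filter_not, Finset.card_sdiff_of_subset (Finset.filter_subset _ _)]
    congr 1
    · simp
    · rw [Finset.filter_univ_mem]
  simp only [L] at key
  rw [key, R, pow_sub₀ (2:ℝ) (by norm_num) (by simpa using Finset.card_le_card (Finset.subset_univ S)),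
    div_eq_mul_inv]

lemma sum_ind1' (m : ℕ) (a : Fin m) (va : Bool) :
    ∑ ω : Fin m → Bool, (if ω a = va then (1:ℝ) else 0) = 2 ^ m / 2 := by
  simpa using sum_ind' m {a} (fun _ => va)

lemma sum_ind2' (m : ℕ) (a b : Fin m) (hab : a ≠ b) (va vb : Bool) :
    ∑ ω : Fin m → Bool, (if ω a = va then (1:ℝ) else 0) * (if ω b = vb then 1 else 0)
      = 2 ^ m / 4 := by
  have h := sum_ind' m {a, b} (fun k => if k = a then va else vb)
  rw [Finset.card_pair hab] at h
  rw [show ((2:ℝ)^m / 4) = 2^m / 2^2 by norm_num, ← h]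
  refine Finset.sum_congr rfl fun ω _ => ?_
  rw [Finset.prod_pair hab]
  simp [hab, Ne.symm hab]

lemma sum_ind3' (m : ℕ) (a b c : Fin m) (hab : a ≠ b) (hac : a ≠ c) (hbc : b ≠ c)
    (va vb vc : Bool) :
    ∑ ω : Fin m → Bool, (if ω a = va then (1:ℝ) else 0) * (if ω b = vb then 1 else 0)
      * (if ω c = vc then 1 else 0) = 2 ^ m / 8 := by
  have h := sum_ind' m {a, b, c} (fun k => if k = a then va else if k = b then vb else vc)
  have hcard : ({a, b, c} : Finset (Fin m)).card = 3 := by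
    rw [Finset.card_insert_of_notMem (by simp [hab, hac]),
      Finset.card_insert_of_notMem (by simp [hbc]), Finset.card_singleton]
  rw [hcard] at h
  rw [show ((2:ℝ)^m / 8) = 2^m / 2^3 by norm_num, ← h]
  refine Finset.sum_congr rfl fun ω _ => ?_
  rw [Finset.prod_insert (by simp [hab, hac]), Finset.prod_insert (by simp [hbc]),
    Finset.prod_singleton]
  simp [hab, hac, hbc, Ne.symm hab, Ne.symm hac, Ne.symm hbc, mul_assoc]

lemma X_cast (m u : ℕ) (ω : Fin m → Bool) :
    (X m u ω : ℝ) = ∑ j ∈ univ.filter (fun j : Fin m => (j:ℕ) < u),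
      (if ω j = true then (1:ℝ) else 0) := by
  rw [X, ← Finset.filter_filter, Finset.card_filter]
  push_cast
  exact Finset.sum_congr rfl fun j _ => by split_ifs <;> norm_num

lemma C_cast (m t : ℕ) (h : t - 1 < m) (ω : Fin m → Bool) :
    (C m t ω : ℝ) = (if ω ⟨t - 1, h⟩ = false then (1:ℝ) else 0) * (X m (t-1) ω : ℝ) := by
  rw [C, dif_pos h]
  split_ifs <;> simp

/-- For `t ≤ u`, `C_t` and `X_u` are uncorrelated. -/
theorem C_X_uncorrelated (m t u : ℕ) (h1 : 1 ≤ t) (htu : t ≤ u) (h2 : u ≤ m) :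
    expec m (fun ω => (C m t ω : ℝ) * (X m u ω : ℝ)) =
      expec m (fun ω => (C m t ω : ℝ)) * expec m (fun ω => (X m u ω : ℝ)) := by
  have hsm : t - 1 < m := by omega
  set s0 : Fin m := ⟨t - 1, hsm⟩ with hs0
  set Fs : Finset (Fin m) := univ.filter (fun i : Fin m => (i:ℕ) < t - 1) with hFs
  set Fu : Finset (Fin m) := univ.filter (fun j : Fin m => (j:ℕ) < u) with hFu
  have hs0Fu : s0 ∈ Fu := by simp [hFu, hs0]; omega
  have hFscard : Fs.card = t - 1 := card_lt' m (t-1) (by omega)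
  have hFucard : Fu.card = u := card_lt' m u h2
  have hiFs : ∀ i ∈ Fs, (i : ℕ) < t - 1 := fun i hi => by simpa [hFs] using hi
  have hine : ∀ i ∈ Fs, i ≠ s0 := by
    intro i hi heq
    have h' := hiFs i hi
    rw [heq] at h'
    simp only [hs0] at h'
    omega
  have hFsFu : Fs ⊆ Fu := by
    intro i hi; simp [hFu]; have := hiFs i hi; omega
  have h2m : (2:ℝ) ^ m ≠ 0 := by positivity
  -- numerator of E[C X]
  have SCX : ∑ ω : Fin m → Bool, (C m t ω : ℝ) * (X m u ω : ℝ)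
      = (t - 1 : ℕ) * u * (2 ^ m / 8) := by
    have hpt : ∀ ω : Fin m → Bool, (C m t ω : ℝ) * (X m u ω : ℝ)
        = ∑ i ∈ Fs, ∑ j ∈ Fu, (if ω s0 = false then (1:ℝ) else 0)
          * (if ω i = true then 1 else 0) * (if ω j = true then 1 else 0) := by
      intro ω
      rw [C_cast m t hsm, X_cast, X_cast]
      simp only [Finset.mul_sum, Finset.sum_mul]
      rw [Finset.sum_comm]
    simp only [hpt]
    rw [Finset.sum_comm]
    have inner : ∀ i ∈ Fs, (∑ ω : Fin m → Bool, ∑ j ∈ Fu,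
        (if ω s0 = false then (1:ℝ) else 0) * (if ω i = true then 1 else 0)
          * (if ω j = true then 1 else 0)) = u * (2 ^ m / 8) := by
      intro i hi
      rw [Finset.sum_comm]
      have hTij : ∀ j ∈ Fu, (∑ ω : Fin m → Bool,
          (if ω s0 = false then (1:ℝ) else 0) * (if ω i = true then 1 else 0)
            * (if ω j = true then 1 else 0))
          = if j = s0 then 0 else if j = i then 2 ^ m / 4 else 2 ^ m / 8 := by
        intro j _
        by_cases hjs : j = s0
        · subst hjs
          simp only [if_pos rfl]
          refine Finset.sum_eq_zero fun ω _ => ?_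
          cases hω : ω s0 <;> simp [hω]
        · by_cases hji : j = i
          · subst hji
            rw [if_neg hjs, if_pos rfl]
            have : ∀ ω : Fin m → Bool,
                (if ω s0 = false then (1:ℝ) else 0) * (if ω j = true then 1 else 0)
                  * (if ω j = true then 1 else 0)
                = (if ω s0 = false then (1:ℝ) else 0) * (if ω j = true then 1 else 0) := by
              intro ω; by_cases hω : ω j = true <;> simp [hω]
            refine (Finset.sum_congr rfl (fun ω _ => this ω)).trans ?_
            exact sum_ind2' m s0 j (Ne.symm hjs) false true
          · rw [if_neg hjs, if_neg hji]
            exact sum_ind3' m s0 i j (Ne.symm (hine i hi)) (Ne.symm hjs) (Ne.symm hji)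
              false true true
      rw [Finset.sum_congr rfl hTij]
      have hval : ∀ j ∈ Fu, (if j = s0 then (0:ℝ) else if j = i then 2 ^ m / 4 else 2 ^ m / 8)
          = 2 ^ m / 8 + (if j = s0 then -(2 ^ m / 8) else 0)
            + (if j = i then 2 ^ m / 8 else 0) := by
        intro j _
        have his : i ≠ s0 := hine i hi
        by_cases hjs : j = s0
        · subst hjs
          simp [Ne.symm his, his]
        · by_cases hji : j = i
          · subst hji
            norm_num [hjs]
            try ring
          · simp only [if_neg hjs, if_neg hji]
            ring
      rw [Finset.sum_congr rfl hval]
      rw [Finset.sum_add_distrib, Finset.sum_add_distrib, Finset.sum_const,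
        Finset.sum_ite_eq' Fu s0 (fun _ => -(2 ^ m / 8)),
        Finset.sum_ite_eq' Fu i (fun _ => (2 ^ m / 8)),
        if_pos hs0Fu, if_pos (hFsFu hi), hFucard]
      ring
    rw [Finset.sum_congr rfl inner, Finset.sum_const, hFscard, nsmul_eq_mul]
    ring
  -- numerator of E[C]
  have SC : ∑ ω : Fin m → Bool, (C m t ω : ℝ) = (t - 1 : ℕ) * (2 ^ m / 4) := by
    have hpt : ∀ ω : Fin m → Bool, (C m t ω : ℝ)
        = ∑ i ∈ Fs, (if ω s0 = false then (1:ℝ) else 0) * (if ω i = true then 1 else 0) := by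
      intro ω
      rw [C_cast m t hsm, X_cast, Finset.mul_sum]
    simp only [hpt]
    rw [Finset.sum_comm]
    have inner : ∀ i ∈ Fs, (∑ ω : Fin m → Bool,
        (if ω s0 = false then (1:ℝ) else 0) * (if ω i = true then 1 else 0)) = 2 ^ m / 4 :=
      fun i hi => sum_ind2' m s0 i (Ne.symm (hine i hi)) false true
    rw [Finset.sum_congr rfl inner, Finset.sum_const, hFscard, nsmul_eq_mul]
  -- numerator of E[X]
  have SX : ∑ ω : Fin m → Bool, (X m u ω : ℝ) = u * (2 ^ m / 2) := by
    simp only [X_cast]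
    rw [Finset.sum_comm]
    rw [Finset.sum_congr rfl (fun j _ => sum_ind1' m j true), Finset.sum_const,
      hFucard, nsmul_eq_mul]
  simp only [expec, SCX, SC, SX]
  field_simp
  ring
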